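/- If G is a graph having a dominating induced matching and the complement of G is disconnected, then G is P_4-free (a cograph). -/

import Mathlib

/-- `M` is an induced matching of `G` that dominates every edge:
edges of `M` are edges of `G`, pairwise at distance at least two,
and every edge of `G` shares an endpoint with some edge of `M`. -/
def IsDIM {V : Type*} (G : SimpleGraph V) (M : Set (Sym2 V)) : Prop :=
  M ⊆ G.edgeSet ∧
  (∀ e ∈ M, ∀ f ∈ M, e ≠ f → ∀ u ∈ e, ∀ v ∈ f, u ≠ v ∧ ¬ G.Adj u v) ∧
  (∀ e ∈ G.edgeSet, ∃ f ∈ M, ∃ u, u ∈ e ∧ u ∈ f)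

/-- If a graph with a dominating induced matching has a disconnected complement,
then it is P₄-free (a cograph). -/
theorem dim_co_disconnected_cograph {V : Type*} [Fintype V] (G : SimpleGraph V)
    (h : ∃ M, IsDIM G M) (hcc : ¬ Gᶜ.Connected) :
    ¬ ∃ a b c d : V, a ≠ c ∧ a ≠ d ∧ b ≠ d ∧
      G.Adj a b ∧ G.Adj b c ∧ G.Adj c d ∧
      ¬ G.Adj a c ∧ ¬ G.Adj a d ∧ ¬ G.Adj b d := by
  rintro ⟨a, b, c, d, hac, had, hbd, hab, hbc, hcd, nac, nad, nbd⟩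
  obtain ⟨M, hsub, hind, hdom⟩ := h
  have hV : Nonempty V := ⟨a⟩
  rw [SimpleGraph.connected_iff] at hcc
  push_neg at hcc
  have hpre : ¬ Gᶜ.Preconnected := fun hp => not_isEmpty_of_nonempty V (hcc hp)
  obtain ⟨x, y, hxy⟩ : ∃ x y, ¬ Gᶜ.Reachable x y := by
    by_contra hxy
    push_neg at hxy
    exact hpre hxy
  -- reachability in the complement from non-adjacency
  have reach : ∀ u v : V, u ≠ v → ¬ G.Adj u v → Gᶜ.Reachable u v := by
    intro u v hne hna
    exact SimpleGraph.Adj.reachable (by rw [SimpleGraph.compl_adj]; exact ⟨hne, hna⟩)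
  have rac : Gᶜ.Reachable a c := reach a c hac nac
  have rad : Gᶜ.Reachable a d := reach a d had nad
  have rab : Gᶜ.Reachable a b := rad.trans (reach b d hbd nbd).symm
  -- find w not reachable from a
  obtain ⟨w, hwa⟩ : ∃ w, ¬ Gᶜ.Reachable a w := by
    by_cases hx : Gᶜ.Reachable a x
    · exact ⟨y, fun hy => hxy (hx.symm.trans hy)⟩
    · exact ⟨x, hx⟩
  have adjw : ∀ u : V, Gᶜ.Reachable a u → G.Adj u w := by
    intro u hu
    by_contra hadj
    rcases eq_or_ne u w with rfl | hne
    · exact hwa hu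
    · exact hwa (hu.trans (SimpleGraph.Adj.reachable
        (by rw [SimpleGraph.compl_adj]; exact ⟨hne, hadj⟩)))
  have haw : G.Adj a w := adjw a (SimpleGraph.Reachable.refl a)
  have hbw : G.Adj b w := adjw b rab
  have hcw : G.Adj c w := adjw c rac
  have hdw : G.Adj d w := adjw d rad
  -- matched vertices
  have dom2 : ∀ u v : V, G.Adj u v → (∃ e ∈ M, u ∈ e) ∨ (∃ e ∈ M, v ∈ e) := by
    intro u v huv
    obtain ⟨f, hfM, z, hz1, hz2⟩ := hdom s(u, v) (by rwa [SimpleGraph.mem_edgeSet])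
    rcases Sym2.mem_iff.1 hz1 with rfl | rfl
    · exact Or.inl ⟨f, hfM, hz2⟩
    · exact Or.inr ⟨f, hfM, hz2⟩
  have same : ∀ (u v : V) (e f : Sym2 V), G.Adj u v → e ∈ M → f ∈ M →
      u ∈ e → v ∈ f → e = f := by
    intro u v e f huv he hf hu hv
    by_contra hne
    exact (hind e he f hf hne u hu v hv).2 huv
  by_cases hmw : ∃ e ∈ M, w ∈ e
  · obtain ⟨e, heM, hwe⟩ := hmw
    set w' := Sym2.Mem.other hwe with hw'
    have hspec : s(w, w') = e := Sym2.other_spec hwe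
    have key : ∀ u : V, G.Adj u w → (∃ f ∈ M, u ∈ f) → u = w' := by
      intro u hu ⟨f, hfM, huf⟩
      have hef : f = e := same u w f e hu hfM heM huf hwe
      have : u ∈ e := hef ▸ huf
      rw [← hspec, Sym2.mem_iff] at this
      rcases this with rfl | rfl
      · exact absurd rfl hu.ne
      · rfl
    have h1 : a = w' ∨ b = w' := by
      rcases dom2 a b hab with hma | hmb
      · exact Or.inl (key a haw hma)
      · exact Or.inr (key b hbw hmb)
    have h2 : c = w' ∨ d = w' := by
      rcases dom2 c d hcd with hmc | hmd
      · exact Or.inl (key c hcw hmc)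
      · exact Or.inr (key d hdw hmd)
    rcases h1 with rfl | rfl <;> rcases h2 with h2 | h2
    · exact hac h2.symm
    · exact had h2.symm
    · exact hbc.ne h2.symm
    · exact hbd h2.symm
  · have ma : ∃ e ∈ M, a ∈ e := (dom2 a w haw).resolve_right hmw
    have mb : ∃ e ∈ M, b ∈ e := (dom2 b w hbw).resolve_right hmw
    have mc : ∃ e ∈ M, c ∈ e := (dom2 c w hcw).resolve_right hmw
    obtain ⟨ea, heaM, haea⟩ := ma
    obtain ⟨eb, hebM, hbeb⟩ := mb
    obtain ⟨ec, hecM, hcec⟩ := mc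
    have e1 : ea = eb := same a b ea eb hab heaM hebM haea hbeb
    have e2 : eb = ec := same b c eb ec hbc hebM hecM hbeb hcec
    have haeb : a ∈ eb := e1 ▸ haea
    have hceb : c ∈ eb := e2 ▸ hcec
    have : eb = s(a, b) := ((Sym2.mem_and_mem_iff hab.ne).1 ⟨haeb, hbeb⟩)
    rw [this, Sym2.mem_iff] at hceb
    rcases hceb with rfl | rfl
    · exact hac rfl
    · exact hbc.ne rfl
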